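/- Let d > δ > 0 be real numbers. Then cosh(δ) · cosh(d+δ)/cosh(d−δ) ≥ 1, so that arccosh(cosh(δ)·cosh(d+δ)/cosh(d−δ)) is well defined; moreover arccosh(cosh(δ)·cosh(d+δ)/cosh(d−δ)) = 2·(tanh d)^{1/2}·δ^{1/2} + O(δ) as δ → 0 (with d fixed). -/

import Mathlib

open Real

/-- Inverse hyperbolic cosine. -/
noncomputable def arcosh (x : ℝ) : ℝ := Real.log (x + Real.sqrt (x ^ 2 - 1))

lemma arcosh_nonneg' {x : ℝ} (hx : 1 ≤ x) : 0 ≤ _root_.arcosh x := by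
  unfold _root_.arcosh
  apply Real.log_nonneg
  have := Real.sqrt_nonneg (x ^ 2 - 1)
  linarith

lemma cosh_arcosh' {x : ℝ} (hx : 1 ≤ x) : Real.cosh (_root_.arcosh x) = x := by
  have h1 : (0:ℝ) ≤ x ^ 2 - 1 := by nlinarith
  have hs2 : Real.sqrt (x ^ 2 - 1) ^ 2 = x ^ 2 - 1 := Real.sq_sqrt h1
  have hs : 0 ≤ Real.sqrt (x ^ 2 - 1) := Real.sqrt_nonneg _
  have hy : 0 < x + Real.sqrt (x ^ 2 - 1) := by linarith
  unfold _root_.arcosh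
  rw [Real.cosh_eq, Real.exp_neg, Real.exp_log hy]
  field_simp
  nlinarith [hs2]

lemma sinh_le_mul_cosh' {t : ℝ} (ht : 0 ≤ t) : Real.sinh t ≤ t * Real.cosh t := by
  have hd : ∀ u : ℝ, HasDerivAt (fun y => y * Real.cosh y - Real.sinh y) (u * Real.sinh u) u := by
    intro u
    have h1 : HasDerivAt (fun y : ℝ => y * Real.cosh y) (1 * Real.cosh u + u * Real.sinh u) u :=
      (hasDerivAt_id u).mul (Real.hasDerivAt_cosh u)
    have h2 := h1.sub (Real.hasDerivAt_sinh u)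
    exact h2.congr_deriv (by ring)
  have hmono : Monotone (fun y => y * Real.cosh y - Real.sinh y) := by
    apply monotone_of_deriv_nonneg
    · exact fun u => (hd u).differentiableAt
    · intro u
      rw [(hd u).deriv]
      rcases le_total 0 u with h | h
      · exact mul_nonneg h (Real.sinh_nonneg_iff.2 h)
      · have := mul_nonneg (neg_nonneg.2 h) (neg_nonneg.2 (Real.sinh_nonpos_iff.2 h))
        nlinarith [this]
  have := hmono ht
  simpa using this

lemma one_add_sq_div_two_le_cosh' (t : ℝ) : 1 + t ^ 2 / 2 ≤ Real.cosh t := by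
  have h : Real.cosh (2 * (t / 2)) = Real.cosh (t / 2) ^ 2 + Real.sinh (t / 2) ^ 2 :=
    Real.cosh_two_mul (t / 2)
  have h2 : Real.cosh (t / 2) ^ 2 = Real.sinh (t / 2) ^ 2 + 1 := Real.cosh_sq (t / 2)
  have h3 : |t / 2| ≤ Real.sinh |t / 2| := Real.self_le_sinh_iff.2 (abs_nonneg _)
  have h4 : Real.sinh |t / 2| = |Real.sinh (t / 2)| := (Real.abs_sinh (t / 2)).symm
  have h5 : |t / 2| ^ 2 ≤ |Real.sinh (t / 2)| ^ 2 := by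
    apply pow_le_pow_left₀ (abs_nonneg _)
    rw [← h4]; exact h3
  rw [sq_abs, sq_abs] at h5
  have h6 : (2 : ℝ) * (t / 2) = t := by ring
  rw [h6] at h
  nlinarith [h, h2, h5]

lemma cosh_sub_one_le' {t : ℝ} (ht : 0 ≤ t) : Real.cosh t - 1 ≤ t ^ 2 / 2 * Real.cosh t := by
  have h : Real.cosh (2 * (t / 2)) = Real.cosh (t / 2) ^ 2 + Real.sinh (t / 2) ^ 2 :=
    Real.cosh_two_mul (t / 2)
  have h2 : Real.cosh (t / 2) ^ 2 = Real.sinh (t / 2) ^ 2 + 1 := Real.cosh_sq (t / 2)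
  have h3 : Real.sinh (t / 2) ≤ t / 2 * Real.cosh (t / 2) := sinh_le_mul_cosh' (by linarith)
  have h4 : 0 ≤ Real.sinh (t / 2) := Real.sinh_nonneg_iff.2 (by linarith)
  have h5 : Real.sinh (t / 2) ^ 2 ≤ (t / 2 * Real.cosh (t / 2)) ^ 2 := pow_le_pow_left₀ h4 h3 2
  have h6 : (2 : ℝ) * (t / 2) = t := by ring
  rw [h6] at h
  have h7 := Real.one_le_cosh t
  nlinarith [h, h2, h5, h7, sq_nonneg t]

lemma cosh_le_one_add_sq {δ : ℝ} (h0 : 0 < δ) (h1 : δ ≤ 1) : Real.cosh δ ≤ 1 + δ ^ 2 := by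
  have h := cosh_sub_one_le' h0.le
  have hc1 := Real.one_le_cosh δ
  have hδsq1 : δ ^ 2 ≤ 1 := by nlinarith
  nlinarith [h, hδsq1, mul_le_mul_of_nonneg_left hδsq1 (show (0:ℝ) ≤ Real.cosh δ - 1 by linarith)]

lemma sinh_le_two_mul {δ : ℝ} (h0 : 0 < δ) (h1 : δ ≤ 1) : Real.sinh δ ≤ 2 * δ := by
  have hsub := sinh_le_mul_cosh' h0.le
  have hcub := cosh_le_one_add_sq h0 h1
  nlinarith [hsub, hcub, h0, h1]

lemma q1_lem {δ : ℝ} (h0 : 0 < δ) (h1 : δ ≤ 1) :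
    Real.cosh δ * (Real.cosh δ - 1) ≤ 2 * δ ^ 2 := by
  have hcub := cosh_le_one_add_sq h0 h1
  have hc1 := Real.one_le_cosh δ
  have hδsq1 : δ ^ 2 ≤ 1 := by nlinarith
  have h2 : Real.cosh δ * (Real.cosh δ - 1) ≤ (1 + δ ^ 2) * δ ^ 2 :=
    mul_le_mul hcub (by linarith) (by linarith) (by positivity)
  have h3 : δ ^ 2 * δ ^ 2 ≤ 1 * δ ^ 2 := mul_le_mul_of_nonneg_right hδsq1 (sq_nonneg δ)
  nlinarith [h2, h3]

lemma q2u_lem {δ : ℝ} (h0 : 0 < δ) (h1 : δ ≤ 1) :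
    Real.sinh δ * (Real.cosh δ + 1) - 2 * δ * Real.cosh δ ≤ 2 * δ ^ 2 := by
  have hsub := sinh_le_mul_cosh' h0.le
  have hcub := cosh_le_one_add_sq h0 h1
  have hc1 := Real.one_le_cosh δ
  have hq1 := q1_lem h0 h1
  nlinarith [mul_le_mul_of_nonneg_right hsub (show (0:ℝ) ≤ Real.cosh δ + 1 by linarith),
    mul_le_mul_of_nonneg_left hq1 h0.le,
    mul_le_mul_of_nonneg_right h1 (sq_nonneg δ)]

lemma q2l_lem {δ : ℝ} (h0 : 0 < δ) (h1 : δ ≤ 1) :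
    -(2 * δ ^ 2) ≤ Real.sinh δ * (Real.cosh δ + 1) - 2 * δ * Real.cosh δ := by
  have hslb : δ ≤ Real.sinh δ := Real.self_le_sinh_iff.2 h0.le
  have hcub := cosh_le_one_add_sq h0 h1
  have hc1 := Real.one_le_cosh δ
  nlinarith [mul_le_mul_of_nonneg_right hslb (show (0:ℝ) ≤ Real.cosh δ + 1 by linarith),
    mul_le_mul_of_nonneg_left (show Real.cosh δ - 1 ≤ δ ^ 2 by linarith) h0.le,
    mul_le_mul_of_nonneg_right h1 (sq_nonneg δ)]

set_option maxHeartbeats 1000000 in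
/-- For `0 < δ < d`, the quantity `cosh δ · cosh(d+δ)/cosh(d−δ)` is at least `1` (so its
`arcosh` is well defined), and `arcosh(cosh δ · cosh(d+δ)/cosh(d−δ)) = 2 (tanh d)^{1/2} δ^{1/2}
+ O(δ)` as `δ → 0` with `d` fixed. -/
theorem arcosh_projection_estimate (d : ℝ) (hd : 0 < d) :
    (∀ δ : ℝ, 0 < δ → δ < d →
      1 ≤ Real.cosh δ * Real.cosh (d + δ) / Real.cosh (d - δ)) ∧
    (∃ C δ₀ : ℝ, 0 < C ∧ 0 < δ₀ ∧ ∀ δ : ℝ, 0 < δ → δ < δ₀ →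
      |_root_.arcosh (Real.cosh δ * Real.cosh (d + δ) / Real.cosh (d - δ)) -
        2 * Real.sqrt (Real.tanh d) * Real.sqrt δ| ≤ C * δ) := by
  constructor
  · intro δ hδ0 hδd
    have hB : 0 < Real.cosh (d - δ) := Real.cosh_pos _
    rw [le_div_iff₀ hB, one_mul]
    have h1 : Real.cosh (d - δ) ≤ Real.cosh (d + δ) := by
      rw [Real.cosh_le_cosh, abs_of_nonneg (by linarith), abs_of_nonneg (by linarith)]
      linarith
    have h2 := Real.one_le_cosh δ
    have h3 := mul_le_mul_of_nonneg_right h2 (Real.cosh_pos (d + δ)).le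
    rw [one_mul] at h3
    linarith
  · set S := Real.sinh d with hSdef
    set Cd := Real.cosh d with hCddef
    set T := Real.tanh d with hTdef
    have hS : 0 < S := Real.sinh_pos_iff.2 hd
    have hCd : 1 ≤ Cd := Real.one_le_cosh d
    have hCd0 : 0 < Cd := by linarith
    have hTSC : T = S / Cd := Real.tanh_eq_sinh_div_cosh d
    have hT0 : 0 < T := by rw [hTSC]; positivity
    have hT1 : T ≤ 1 := by
      rw [hTSC, div_le_one hCd0]
      exact (Real.sinh_lt_cosh d).le
    set K : ℝ := 2 * Cd ^ 2 + 2 * S * Cd + 4 * S ^ 2 with hKdef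
    have hK0 : 0 < K := by nlinarith
    set K₂ : ℝ := 2 * K + (4 + 2 * K) * (2 + K) with hK₂def
    have hK₂0 : 0 < K₂ := by nlinarith
    have hsT : 0 < Real.sqrt T := Real.sqrt_pos.2 hT0
    refine ⟨K₂ / (2 * Real.sqrt T), min 1 (T / K), by positivity, by positivity, ?_⟩
    intro δ hδ0 hδlt
    have hδ1 : δ ≤ 1 := le_trans hδlt.le (min_le_left _ _)
    have hδTK : δ < T / K := lt_of_lt_of_le hδlt (min_le_right _ _)
    have hKδT : K * δ ≤ T := by
      rw [lt_div_iff₀ hK0] at hδTK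
      linarith [hδTK]
    -- basic bounds on cosh δ and sinh δ
    set cδ := Real.cosh δ with hcδdef
    set sδ := Real.sinh δ with hsδdef
    have hc1 : 1 ≤ cδ := Real.one_le_cosh δ
    have hcub : cδ ≤ 1 + δ ^ 2 := cosh_le_one_add_sq hδ0 hδ1
    have hslb : δ ≤ sδ := Real.self_le_sinh_iff.2 hδ0.le
    have hsub : sδ ≤ δ * cδ := sinh_le_mul_cosh' hδ0.le
    have hs2 : sδ ≤ 2 * δ := sinh_le_two_mul hδ0 hδ1
    -- the quantity x
    set x := Real.cosh δ * Real.cosh (d + δ) / Real.cosh (d - δ) with hxdef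
    have hBpos : 0 < Real.cosh (d - δ) := Real.cosh_pos _
    have hBeq : Real.cosh (d - δ) = Cd * cδ - S * sδ := Real.cosh_sub d δ
    have hAeq : Real.cosh (d + δ) = Cd * cδ + S * sδ := Real.cosh_add d δ
    have hB1 : 1 ≤ Cd * cδ - S * sδ := by rw [← hBeq]; exact Real.one_le_cosh _
    have hBpos' : 0 < Cd * cδ - S * sδ := by linarith
    have hxB : x * (Cd * cδ - S * sδ) = cδ * (Cd * cδ + S * sδ) := by
      rw [hxdef, hAeq, hBeq]
      exact div_mul_cancel₀ _ hBpos'.ne'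
    have hTC : T * Cd = S := by
      rw [hTSC]; field_simp
    -- key expansion
    have hE : (x - 1 - 2 * T * δ) * ((Cd * cδ - S * sδ) * Cd) =
        Cd ^ 2 * (cδ * (cδ - 1)) + S * Cd * (sδ * (cδ + 1) - 2 * δ * cδ) + 2 * S ^ 2 * (δ * sδ) := by
      linear_combination Cd * hxB - 2 * δ * (Cd * cδ - S * sδ) * hTC
    -- bounds on the three pieces
    have q1 : cδ * (cδ - 1) ≤ 2 * δ ^ 2 := q1_lem hδ0 hδ1
    have q1' : 0 ≤ cδ * (cδ - 1) := mul_nonneg (by linarith) (by linarith)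
    have q2u : sδ * (cδ + 1) - 2 * δ * cδ ≤ 2 * δ ^ 2 := q2u_lem hδ0 hδ1
    have q2l : -(2 * δ ^ 2) ≤ sδ * (cδ + 1) - 2 * δ * cδ := q2l_lem hδ0 hδ1
    have q3u : δ * sδ ≤ 2 * δ ^ 2 := by
      have := mul_le_mul_of_nonneg_left hs2 hδ0.le
      calc δ * sδ ≤ δ * (2 * δ) := this
        _ = 2 * δ ^ 2 := by ring
    have q3l : 0 ≤ δ * sδ := mul_nonneg hδ0.le (by linarith)
    have hSCd : 0 ≤ S * Cd := by positivity
    have hS2 : (0:ℝ) ≤ 2 * S ^ 2 := by positivity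
    have hnum_ub : (x - 1 - 2 * T * δ) * ((Cd * cδ - S * sδ) * Cd) ≤ K * δ ^ 2 := by
      rw [hE, hKdef]
      linarith [mul_le_mul_of_nonneg_left q1 (sq_nonneg Cd),
        mul_le_mul_of_nonneg_left q2u hSCd,
        mul_le_mul_of_nonneg_left q3u hS2]
    have hnum_lb : -(K * δ ^ 2) ≤ (x - 1 - 2 * T * δ) * ((Cd * cδ - S * sδ) * Cd) := by
      rw [hE, hKdef]
      linarith [mul_le_mul_of_nonneg_left q1' (sq_nonneg Cd),
        mul_le_mul_of_nonneg_left q2l hSCd,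
        mul_le_mul_of_nonneg_left q3l hS2,
        mul_nonneg (sq_nonneg Cd) (sq_nonneg δ),
        mul_nonneg (sq_nonneg S) (sq_nonneg δ),
        mul_nonneg hSCd (sq_nonneg δ)]
    -- bounds on x - 1 - 2Tδ
    have hP1 : 1 ≤ (Cd * cδ - S * sδ) * Cd := by
      have := mul_le_mul hB1 hCd zero_le_one (by linarith)
      linarith
    have hKδnn : 0 ≤ K * δ ^ 2 := mul_nonneg hK0.le (sq_nonneg δ)
    have hEub : x - 1 - 2 * T * δ ≤ K * δ ^ 2 := by
      rcases le_or_gt (x - 1 - 2 * T * δ) 0 with h | h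
      · linarith
      · have h2 := mul_le_mul_of_nonneg_left hP1 h.le
        rw [mul_one] at h2
        linarith [hnum_ub]
    have hElb : -(K * δ ^ 2) ≤ x - 1 - 2 * T * δ := by
      rcases le_or_gt 0 (x - 1 - 2 * T * δ) with h | h
      · linarith
      · have h2 : (x - 1 - 2 * T * δ) * ((Cd * cδ - S * sδ) * Cd) ≤ (x - 1 - 2 * T * δ) * 1 := by
          apply mul_le_mul_of_nonpos_left hP1 h.le
        rw [mul_one] at h2
        linarith [hnum_lb]
    -- x ≥ 1 + Tδ
    have hKδ2 : K * δ ^ 2 ≤ T * δ := by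
      have := mul_le_mul_of_nonneg_right hKδT hδ0.le
      calc K * δ ^ 2 = K * δ * δ := by ring
        _ ≤ T * δ := this
    have hTδ0 : 0 < T * δ := mul_pos hT0 hδ0
    have hx1 : 1 + T * δ ≤ x := by linarith
    have hx1' : 1 ≤ x := by linarith
    have hTδδ : T * δ ≤ δ := by
      have := mul_le_mul_of_nonneg_right hT1 hδ0.le
      linarith
    have hδ2δ : δ ^ 2 ≤ δ := by
      have h := mul_le_mul_of_nonneg_right hδ1 hδ0.le
      calc δ ^ 2 = δ * δ := sq δ
        _ ≤ 1 * δ := h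
        _ = δ := one_mul δ
    have hKδ2δ : K * δ ^ 2 ≤ K * δ := mul_le_mul_of_nonneg_left hδ2δ hK0.le
    have hxu : x - 1 ≤ (2 + K) * δ := by linarith [hEub, hTδδ, hKδ2δ]
    -- t = arcosh x
    set t := _root_.arcosh x with htdef
    have ht0 : 0 ≤ t := arcosh_nonneg' hx1'
    have hcosht : Real.cosh t = x := cosh_arcosh' hx1'
    have htu : t ^ 2 ≤ 2 * (x - 1) := by
      have := one_add_sq_div_two_le_cosh' t
      rw [hcosht] at this
      linarith
    have htl : 2 * (x - 1) ≤ t ^ 2 * x := by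
      have h := cosh_sub_one_le' ht0
      rw [hcosht] at h
      linarith [h]
    have hA : t ^ 2 ≤ 4 * T * δ + 2 * K * δ ^ 2 := by linarith
    have ht2u' : t ^ 2 ≤ (4 + 2 * K) * δ := by linarith [hA, hTδδ, hKδ2δ]
    have hx1nn : 0 ≤ x - 1 := by linarith
    have ht2b : t ^ 2 * (x - 1) ≤ (4 + 2 * K) * (2 + K) * δ ^ 2 := by
      have h := mul_le_mul ht2u' hxu hx1nn (by positivity)
      calc t ^ 2 * (x - 1) ≤ (4 + 2 * K) * δ * ((2 + K) * δ) := h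
        _ = (4 + 2 * K) * (2 + K) * δ ^ 2 := by ring
    have hBl : 4 * T * δ - K₂ * δ ^ 2 ≤ t ^ 2 := by
      have hid : t ^ 2 * x = t ^ 2 + t ^ 2 * (x - 1) := by ring
      rw [hid] at htl
      rw [hK₂def]
      linarith [htl, ht2b, hElb]
    -- g = 2 √T √δ
    set g := 2 * Real.sqrt T * Real.sqrt δ with hgdef
    have hsδ' : 0 < Real.sqrt δ := Real.sqrt_pos.2 hδ0
    have hgpos : 0 < g := by positivity
    have hg2 : g ^ 2 = 4 * T * δ := by
      rw [hgdef, mul_pow, mul_pow, Real.sq_sqrt hT0.le, Real.sq_sqrt hδ0.le]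
      ring
    have h2K : 2 * K * δ ^ 2 ≤ K₂ * δ ^ 2 := by
      have h1 : (0:ℝ) ≤ (4 + 2 * K) * (2 + K) :=
        mul_nonneg (by linarith) (by linarith)
      have := mul_le_mul_of_nonneg_right (show 2 * K ≤ K₂ by rw [hK₂def]; linarith) (sq_nonneg δ)
      linarith
    have hsqabs : |t ^ 2 - g ^ 2| ≤ K₂ * δ ^ 2 := by
      rw [abs_le, hg2]
      constructor
      · linarith [hBl]
      · linarith [hA, h2K]
    have habs : |t - g| * (t + g) = |t ^ 2 - g ^ 2| := by
      have h1 : 0 ≤ t + g := by linarith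
      rw [← abs_of_nonneg h1, ← abs_mul]
      congr 1
      ring
    have hdiffg : |t - g| * g ≤ K₂ * δ ^ 2 := by
      have h1 : g ≤ t + g := by linarith
      have h2 : |t - g| * g ≤ |t - g| * (t + g) :=
        mul_le_mul_of_nonneg_left h1 (abs_nonneg _)
      rw [habs] at h2
      linarith [hsqabs]
    have hδsq : δ ≤ Real.sqrt δ := by
      have h := Real.sqrt_le_sqrt hδ2δ
      rwa [Real.sqrt_sq hδ0.le] at h
    have hgl : 2 * Real.sqrt T * δ ≤ g := by
      rw [hgdef]
      exact mul_le_mul_of_nonneg_left hδsq (by positivity)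
    have hfin : |t - g| * (2 * Real.sqrt T * δ) ≤ K₂ * δ ^ 2 := by
      calc |t - g| * (2 * Real.sqrt T * δ) ≤ |t - g| * g :=
            mul_le_mul_of_nonneg_left hgl (abs_nonneg _)
        _ ≤ K₂ * δ ^ 2 := hdiffg
    have heq : K₂ / (2 * Real.sqrt T) * δ = K₂ * δ ^ 2 / (2 * Real.sqrt T * δ) := by
      field_simp
    rw [heq]
    exact (le_div_iff₀ (by positivity)).2 hfin
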